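/- Let d ≥ 1 and let μ, ν be Borel probability measures on ℝ^d with finite first moments, i.e., ∫ |x| dμ(x) < ∞ and ∫ |x| dν(x) < ∞. Then μ ≤_st ν if and only if ∫ f dμ ≤ ∫ f dν for every nonnegative 1-Lipschitz increasing function f : ℝ^d → ℝ. -/

import Mathlib

open MeasureTheory Pointwise NNReal ENNReal

/-- The Euclidean norm on `ℝ^d = Fin d → ℝ`. -/
noncomputable def eucNorm (d : ℕ) (x : Fin d → ℝ) : ℝ :=
  Real.sqrt (∑ i, (x i) ^ 2)

/-- The stochastic order on Borel probability measures on `ℝ^d`: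
`μ ≤ₛₜ ν` iff `∫ f dμ ≤ ∫ f dν` for every bounded measurable increasing `f`
(w.r.t. the coordinatewise partial order on `ℝ^d`). -/
def StochasticallyLE {d : ℕ} (μ ν : Measure (Fin d → ℝ)) : Prop :=
  ∀ f : (Fin d → ℝ) → ℝ, Measurable f → (∃ M : ℝ, ∀ x, |f x| ≤ M) → Monotone f →
    ∫ x, f x ∂μ ≤ ∫ x, f x ∂ν

/-! ### Auxiliary lemmas -/

lemma aux_dist_le_eucNorm {d : ℕ} (x y : Fin d → ℝ) : dist x y ≤ eucNorm d (x - y) := by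
  refine (dist_pi_le_iff (Real.sqrt_nonneg _)).2 fun i => ?_
  rw [Real.dist_eq]
  calc |x i - y i| = Real.sqrt ((x i - y i) ^ 2) := (Real.sqrt_sq_eq_abs _).symm
    _ ≤ eucNorm d (x - y) := by
        apply Real.sqrt_le_sqrt
        exact Finset.single_le_sum (f := fun j => ((x - y) j)^2) (fun j _ => sq_nonneg _)
          (Finset.mem_univ i)

lemma aux_eucNorm_le_sqrt_mul_dist {d : ℕ} (x y : Fin d → ℝ) :
    eucNorm d (x - y) ≤ Real.sqrt d * dist x y := by
  rw [← Real.sqrt_sq dist_nonneg, ← Real.sqrt_mul (by positivity)]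
  apply Real.sqrt_le_sqrt
  calc ∑ i, ((x - y) i)^2 ≤ ∑ _i : Fin d, dist x y ^ 2 := by
        refine Finset.sum_le_sum fun i _ => ?_
        have h := dist_le_pi_dist x y i
        have h2 : |x i - y i| ≤ dist x y := by rwa [Real.dist_eq] at h
        calc ((x-y) i)^2 = |x i - y i|^2 := by rw [sq_abs]; rfl
          _ ≤ dist x y ^2 := by gcongr
    _ = d * dist x y ^ 2 := by simp [Finset.sum_const, nsmul_eq_mul]

/-- The distance to an upper set is antitone. -/
lemma aux_infDist_anti {d : ℕ} {S : Set (Fin d → ℝ)} (hS : IsUpperSet S) (hne : S.Nonempty)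
    {x y : Fin d → ℝ} (hxy : x ≤ y) : Metric.infDist y S ≤ Metric.infDist x S := by
  set v := y - x with hv
  have hiso : Isometry (fun z : Fin d → ℝ => z + v) := Isometry.of_dist_eq (by
    intro a b; rw [dist_eq_norm, dist_eq_norm]; congr 1; abel)
  have himg : (fun z : Fin d → ℝ => z + v) '' S ⊆ S := by
    rintro _ ⟨z, hz, rfl⟩
    refine hS ?_ hz
    intro i; simp [hv]; linarith [hxy i]
  have hxv : x + v = y := by simp [hv]
  calc Metric.infDist y S ≤ Metric.infDist y ((fun z : Fin d → ℝ => z + v) '' S) :=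
        Metric.infDist_le_infDist_of_subset himg (hne.image _)
    _ = Metric.infDist x S := by
        rw [← hxv]; exact Metric.infDist_image hiso

/-- Measure comparison on closed upper sets, from the Lipschitz test hypothesis. -/
lemma aux_closed_upper_le {d : ℕ}
    (μ ν : Measure (Fin d → ℝ)) [IsProbabilityMeasure μ] [IsProbabilityMeasure ν]
    (hLip : ∀ f : (Fin d → ℝ) → ℝ, (∀ x, 0 ≤ f x) →
        (∀ x y, |f x - f y| ≤ eucNorm d (x - y)) → Monotone f →
        ∫ x, f x ∂μ ≤ ∫ x, f x ∂ν)
    {S : Set (Fin d → ℝ)} (hScl : IsClosed S) (hSup : IsUpperSet S) :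
    μ S ≤ ν S := by
  rcases S.eq_empty_or_nonempty with rfl | hne
  · simp
  set φ : ℕ → (Fin d → ℝ) → ℝ :=
    fun n x => max (((n : ℝ) + 1)⁻¹ - Metric.infDist x S) 0 with hφ
  have hpos : ∀ n : ℕ, (0:ℝ) < (n : ℝ) + 1 := fun n => by positivity
  have hφ_nonneg : ∀ n x, 0 ≤ φ n x := fun n x => le_max_right _ _
  have hφ_le : ∀ n x, φ n x ≤ ((n:ℝ)+1)⁻¹ := by
    intro n x
    apply max_le _ (by positivity)
    have := Metric.infDist_nonneg (x := x) (s := S); linarith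
  have hφ_lip : ∀ n x y, |φ n x - φ n y| ≤ eucNorm d (x - y) := by
    intro n x y
    have h1 : |φ n x - φ n y| ≤ |Metric.infDist x S - Metric.infDist y S| := by
      have := abs_max_sub_max_le_abs (((n : ℝ) + 1)⁻¹ - Metric.infDist x S)
        (((n : ℝ) + 1)⁻¹ - Metric.infDist y S) 0
      calc |φ n x - φ n y|
          ≤ |(((n : ℝ) + 1)⁻¹ - Metric.infDist x S) -
              (((n : ℝ) + 1)⁻¹ - Metric.infDist y S)| := this
        _ = |Metric.infDist y S - Metric.infDist x S| := by ring_nf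
        _ = |Metric.infDist x S - Metric.infDist y S| := abs_sub_comm _ _
    refine h1.trans ?_
    have h2 : |Metric.infDist x S - Metric.infDist y S| ≤ dist x y := by
      rw [abs_sub_le_iff]
      constructor
      · have := Metric.infDist_le_infDist_add_dist (x := x) (y := y) (s := S); linarith
      · have := Metric.infDist_le_infDist_add_dist (x := y) (y := x) (s := S)
        rw [dist_comm] at this; linarith
    exact h2.trans (aux_dist_le_eucNorm x y)
  have hφ_mono : ∀ n, Monotone (φ n) := by
    intro n x y hxy
    have := aux_infDist_anti hSup hne hxy
    exact max_le_max (by linarith) le_rfl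
  have hφ_cont : ∀ n, Continuous (φ n) := fun n =>
    ((continuous_const.sub (Metric.continuous_infDist_pt S)).max continuous_const)
  set F : ℕ → (Fin d → ℝ) → ℝ := fun n x => ((n:ℝ)+1) * φ n x with hF
  have hF_le_one : ∀ n x, |F n x| ≤ 1 := by
    intro n x
    rw [abs_of_nonneg (mul_nonneg (hpos n).le (hφ_nonneg n x))]
    calc ((n:ℝ)+1) * φ n x ≤ ((n:ℝ)+1) * ((n:ℝ)+1)⁻¹ :=
          mul_le_mul_of_nonneg_left (hφ_le n x) (hpos n).le
      _ = 1 := mul_inv_cancel₀ (hpos n).ne'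
  have hF_tendsto : ∀ x, Filter.Tendsto (fun n => F n x) Filter.atTop
      (nhds (S.indicator (fun _ => (1:ℝ)) x)) := by
    intro x
    by_cases hx : x ∈ S
    · have : ∀ n, F n x = 1 := by
        intro n
        have h0 : Metric.infDist x S = 0 := Metric.infDist_zero_of_mem hx
        simp [hF, hφ, h0, max_eq_left (by positivity : (0:ℝ) ≤ ((n:ℝ)+1)⁻¹),
          mul_inv_cancel₀ (hpos n).ne']
      simp only [Set.indicator_of_mem hx]
      simp [this]
    · have hd0 : 0 < Metric.infDist x S := (hScl.notMem_iff_infDist_pos hne).1 hx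
      have : ∀ᶠ n in Filter.atTop, F n x = 0 := by
        filter_upwards [Filter.eventually_ge_atTop ⌈(Metric.infDist x S)⁻¹⌉₊] with n hn
        have h1 : ((n:ℝ)+1)⁻¹ ≤ Metric.infDist x S := by
          rw [inv_le_comm₀ (hpos n) hd0]
          calc (Metric.infDist x S)⁻¹ ≤ (⌈(Metric.infDist x S)⁻¹⌉₊ : ℝ) := Nat.le_ceil _
            _ ≤ (n:ℝ) := by exact_mod_cast hn
            _ ≤ (n:ℝ)+1 := by linarith
        simp [hF, hφ, max_eq_right (by linarith : ((n:ℝ)+1)⁻¹ - Metric.infDist x S ≤ 0)]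
      simp only [Set.indicator_of_notMem hx]
      exact Filter.Tendsto.congr' (this.mono fun n h => h.symm) tendsto_const_nhds
  have hFle : ∀ n, ∫ x, F n x ∂μ ≤ ∫ x, F n x ∂ν := by
    intro n
    have h := hLip (φ n) (hφ_nonneg n) (hφ_lip n) (hφ_mono n)
    simp only [hF]
    rw [integral_const_mul, integral_const_mul]
    exact mul_le_mul_of_nonneg_left h (hpos n).le
  have hSm : MeasurableSet S := hScl.measurableSet
  have hDCT : ∀ (κ : Measure (Fin d → ℝ)) [IsProbabilityMeasure κ],
      Filter.Tendsto (fun n => ∫ x, F n x ∂κ) Filter.atTop (nhds ((κ S).toReal)) := by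
    intro κ _
    have : ∫ x, S.indicator (fun _ => (1:ℝ)) x ∂κ = (κ S).toReal := by
      rw [integral_indicator_const _ hSm]; simp; rfl
    rw [← this]
    refine tendsto_integral_of_dominated_convergence (fun _ => 1)
      (fun n => ((continuous_const.mul (hφ_cont n)).aestronglyMeasurable))
      (integrable_const 1) (fun n => Filter.Eventually.of_forall fun x => ?_)
      (Filter.Eventually.of_forall fun x => hF_tendsto x)
    simpa using hF_le_one n x
  have hμ := hDCT μ
  have hν := hDCT ν
  have : (μ S).toReal ≤ (ν S).toReal := le_of_tendsto_of_tendsto' hμ hν hFle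
  exact (ENNReal.toReal_le_toReal (measure_ne_top μ S) (measure_ne_top ν S)).1 this

/-- Measure comparison on all Borel upper sets, via inner regularity. -/
lemma aux_upper_le {d : ℕ}
    (μ ν : Measure (Fin d → ℝ)) [IsProbabilityMeasure μ] [IsProbabilityMeasure ν]
    (hclosed : ∀ S : Set (Fin d → ℝ), IsClosed S → IsUpperSet S → μ S ≤ ν S)
    {U : Set (Fin d → ℝ)} (hUm : MeasurableSet U) (hUup : IsUpperSet U) :
    μ U ≤ ν U := by
  refine ENNReal.le_of_forall_pos_le_add fun ε hε _ => ?_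
  obtain ⟨K, hKU, hKc, hK⟩ :=
    hUm.exists_isCompact_lt_add (measure_ne_top μ U) (ε := (ε : ℝ≥0∞)) (by simpa using hε.ne')
  set S := K + Set.Ici (0 : Fin d → ℝ) with hS
  have hScl : IsClosed S := IsClosed.add_left_of_isCompact isClosed_Ici hKc
  have hSup : IsUpperSet S := by
    rintro x y hxy ⟨a, ha, b, hb, rfl⟩
    refine ⟨a, ha, y - a, ?_, add_sub_cancel a y⟩
    have hb' : (0 : Fin d → ℝ) ≤ b := hb
    intro i
    have h1 := hxy i
    have h2 := hb' i
    simp only [Pi.add_apply, Pi.sub_apply, Pi.zero_apply] at h1 h2 ⊢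
    simp only [Set.mem_Ici] at *
    linarith
  have hKS : K ⊆ S := fun a ha => ⟨a, ha, 0, Set.mem_Ici.2 le_rfl, (add_zero a)⟩
  have hSU : S ⊆ U := by
    rintro _ ⟨a, ha, b, hb, rfl⟩
    exact hUup (le_add_of_nonneg_right hb) (hKU ha)
  calc μ U ≤ μ K + ε := hK.le
    _ ≤ μ S + ε := add_le_add_left (measure_mono hKS) _
    _ ≤ ν S + ε := add_le_add_left (hclosed S hScl hSup) _
    _ ≤ ν U + ε := add_le_add_left (measure_mono hSU) _

/-- Integral comparison for bounded measurable monotone functions from upper-set comparison. -/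
lemma aux_integral_le {d : ℕ}
    (μ ν : Measure (Fin d → ℝ)) [IsProbabilityMeasure μ] [IsProbabilityMeasure ν]
    (hupper : ∀ U : Set (Fin d → ℝ), MeasurableSet U → IsUpperSet U → μ U ≤ ν U)
    (g : (Fin d → ℝ) → ℝ) (hgm : Measurable g) (M : ℝ) (hM : ∀ x, |g x| ≤ M)
    (hmono : Monotone g) : ∫ x, g x ∂μ ≤ ∫ x, g x ∂ν := by
  set h : (Fin d → ℝ) → ℝ := fun x => g x + M with hh
  have hMnn : 0 ≤ M := le_trans (abs_nonneg _) (hM (fun _ => 0))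
  have hnn : ∀ x, 0 ≤ h x := fun x => by have := (abs_le.1 (hM x)).1; simp [hh]; linarith
  have hhb : ∀ x, ‖h x‖ ≤ 2 * M := fun x => by
    rw [Real.norm_eq_abs, abs_of_nonneg (hnn x)]
    have := (abs_le.1 (hM x)).2; simp [hh]; linarith
  have hhm : Measurable h := hgm.add_const M
  have key : ∫⁻ x, ENNReal.ofReal (h x) ∂μ ≤ ∫⁻ x, ENNReal.ofReal (h x) ∂ν := by
    rw [lintegral_eq_lintegral_meas_lt μ (Filter.Eventually.of_forall hnn) hhm.aemeasurable,
        lintegral_eq_lintegral_meas_lt ν (Filter.Eventually.of_forall hnn) hhm.aemeasurable]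
    refine lintegral_mono fun t => ?_
    refine hupper _ (measurableSet_lt measurable_const hhm) ?_
    intro x y hxy hx
    simp only [Set.mem_setOf_eq] at hx ⊢
    have := hmono hxy
    simp only [hh] at hx ⊢
    linarith
  have hfin : ∀ (κ : Measure (Fin d → ℝ)) [IsProbabilityMeasure κ],
      ∫⁻ x, ENNReal.ofReal (h x) ∂κ ≤ ENNReal.ofReal (2 * M) := by
    intro κ _
    calc ∫⁻ x, ENNReal.ofReal (h x) ∂κ ≤ ∫⁻ _, ENNReal.ofReal (2 * M) ∂κ :=
          lintegral_mono fun x => ENNReal.ofReal_le_ofReal (by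
            simpa [Real.norm_eq_abs, abs_of_nonneg (hnn x)] using hhb x)
      _ = ENNReal.ofReal (2 * M) := by simp
  have heq : ∀ (κ : Measure (Fin d → ℝ)) [IsProbabilityMeasure κ],
      ∫ x, h x ∂κ = (∫⁻ x, ENNReal.ofReal (h x) ∂κ).toReal := by
    intro κ _
    rw [integral_eq_lintegral_of_nonneg_ae (Filter.Eventually.of_forall hnn)
      hhm.aestronglyMeasurable]
  have hμν : ∫ x, h x ∂μ ≤ ∫ x, h x ∂ν := by
    rw [heq μ, heq ν]
    exact ENNReal.toReal_mono (lt_of_le_of_lt (hfin ν) ENNReal.ofReal_lt_top).ne key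
  have hgi : ∀ (κ : Measure (Fin d → ℝ)) [IsProbabilityMeasure κ], Integrable g κ := by
    intro κ _
    exact ⟨hgm.aestronglyMeasurable,
      HasFiniteIntegral.of_bounded (C := M) (Filter.Eventually.of_forall fun x => hM x)⟩
  have hsum : ∀ (κ : Measure (Fin d → ℝ)) [IsProbabilityMeasure κ],
      ∫ x, h x ∂κ = ∫ x, g x ∂κ + M := by
    intro κ _
    rw [hh]
    rw [integral_add (hgi κ) (integrable_const M), integral_const]
    simp
  rw [hsum μ, hsum ν] at hμν
  linarith

/-- For probability measures with finite first moments, the stochastic order can be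
tested on nonnegative `1`-Lipschitz increasing functions. -/
theorem stochastic_order_iff_lipschitz_test
    (d : ℕ) (hd : 1 ≤ d)
    (μ ν : Measure (Fin d → ℝ)) [IsProbabilityMeasure μ] [IsProbabilityMeasure ν]
    (hμ_mom : Integrable (fun x => eucNorm d x) μ)
    (hν_mom : Integrable (fun x => eucNorm d x) ν) :
    StochasticallyLE μ ν ↔
      ∀ f : (Fin d → ℝ) → ℝ, (∀ x, 0 ≤ f x) →
        (∀ x y, |f x - f y| ≤ eucNorm d (x - y)) → Monotone f →
        ∫ x, f x ∂μ ≤ ∫ x, f x ∂ν := by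
  constructor
  · -- forward direction
    intro hSL f hf0 hflip hfmono
    have hcont : Continuous f := by
      refine (LipschitzWith.of_dist_le_mul (K := Real.toNNReal (Real.sqrt d))
        fun x y => ?_).continuous
      rw [Real.dist_eq, Real.coe_toNNReal _ (Real.sqrt_nonneg _)]
      exact (hflip x y).trans (aux_eucNorm_le_sqrt_mul_dist x y)
    have hfm : Measurable f := hcont.measurable
    have hbound : ∀ x, ‖f x‖ ≤ ‖f 0 + eucNorm d x‖ := by
      intro x
      have h1 : f x - f 0 ≤ eucNorm d (x - 0) := le_trans (le_abs_self _) (hflip x 0)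
      rw [sub_zero] at h1
      have h2 : 0 ≤ eucNorm d x := Real.sqrt_nonneg _
      rw [Real.norm_eq_abs, Real.norm_eq_abs, abs_of_nonneg (hf0 x),
        abs_of_nonneg (by linarith [hf0 0] : (0:ℝ) ≤ f 0 + eucNorm d x)]
      linarith
    have hInt : ∀ (κ : Measure (Fin d → ℝ)) [IsProbabilityMeasure κ],
        Integrable (fun x => eucNorm d x) κ → Integrable f κ := by
      intro κ _ hmom
      exact Integrable.mono ((integrable_const (f 0)).add hmom) hfm.aestronglyMeasurable
        (Filter.Eventually.of_forall hbound)
    set F : ℕ → (Fin d → ℝ) → ℝ := fun n x => min (f x) n with hF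
    have hFnn : ∀ n x, 0 ≤ F n x := fun n x => le_min (hf0 x) (Nat.cast_nonneg n)
    have hFle : ∀ n, ∫ x, F n x ∂μ ≤ ∫ x, F n x ∂ν := by
      intro n
      refine hSL (F n) (hfm.min measurable_const) ⟨n, fun x => ?_⟩ (hfmono.min monotone_const)
      rw [abs_of_nonneg (hFnn n x)]
      exact min_le_right _ _
    have hFleν : ∀ n, ∫ x, F n x ∂ν ≤ ∫ x, f x ∂ν := by
      intro n
      refine integral_mono ?_ (hInt ν hν_mom) (fun x => min_le_left _ _)
      exact Integrable.mono (hInt ν hν_mom) (hfm.min measurable_const).aestronglyMeasurable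
        (Filter.Eventually.of_forall fun x => by
          rw [Real.norm_eq_abs, Real.norm_eq_abs, abs_of_nonneg (hFnn n x),
            abs_of_nonneg (hf0 x)]
          exact min_le_left _ _)
    have hT : Filter.Tendsto (fun n => ∫ x, F n x ∂μ) Filter.atTop (nhds (∫ x, f x ∂μ)) := by
      refine tendsto_integral_of_dominated_convergence f
        (fun n => (hfm.min measurable_const).aestronglyMeasurable) (hInt μ hμ_mom)
        (fun n => Filter.Eventually.of_forall fun x => ?_)
        (Filter.Eventually.of_forall fun x => ?_)
      · rw [Real.norm_eq_abs, abs_of_nonneg (hFnn n x)]; exact min_le_left _ _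
      · have : ∀ᶠ n : ℕ in Filter.atTop, F n x = f x := by
          filter_upwards [Filter.eventually_ge_atTop ⌈f x⌉₊] with n hn
          simp only [hF]
          exact min_eq_left (le_trans (Nat.le_ceil _) (by exact_mod_cast hn))
        exact Filter.Tendsto.congr' (this.mono fun n h => h.symm) tendsto_const_nhds
    exact le_of_tendsto hT (Filter.Eventually.of_forall fun n => (hFle n).trans (hFleν n))
  · -- backward direction
    intro hLip g hgm ⟨M, hM⟩ hgmono
    have hclosed : ∀ S : Set (Fin d → ℝ), IsClosed S → IsUpperSet S → μ S ≤ ν S :=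
      fun S hScl hSup => aux_closed_upper_le μ ν hLip hScl hSup
    have hupper : ∀ U : Set (Fin d → ℝ), MeasurableSet U → IsUpperSet U → μ U ≤ ν U :=
      fun U hUm hUup => aux_upper_le μ ν hclosed hUm hUup
    exact aux_integral_le μ ν hupper g hgm M hM hgmono
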